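/- There exists a probability space, a decreasing sequence of σ-algebras (F_n), and a bounded random variable X with |X| ≤ 1 such that E(X | F_n) → 0 almost surely but ‖E(X | F_n)‖_∞ = 1 for all n; i.e., the backward martingale convergence theorem fails in L^∞. -/

import Mathlib

open MeasureTheory Filter Finset
open scoped ENNReal Topology

noncomputable section
namespace BMF

def c (k : ℕ) : ℝ≥0∞ := 2⁻¹ ^ (k / 2 + 2)

def μ : Measure ℕ := Measure.sum (fun k => c k • Measure.dirac k)

def f (n k : ℕ) : ℕ := if k < 2 * n then 0 else k + 1

def F (n : ℕ) : MeasurableSpace ℕ := MeasurableSpace.comap (f n) ⊤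

def X (k : ℕ) : ℝ := (-1) ^ k

def Y (n k : ℕ) : ℝ := if k < 2 * n then 0 else (-1) ^ k

lemma c_pair (m : ℕ) : c (2 * m) = 2⁻¹ ^ (m + 2) ∧ c (2 * m + 1) = 2⁻¹ ^ (m + 2) := by
  constructor <;> simp [c] <;> congr 1 <;> omega

lemma c_ne_zero (k : ℕ) : c k ≠ 0 := by
  simp [c]

lemma μ_singleton (a : ℕ) : μ {a} = c a := by
  have hz : ∀ b : ℕ, b ≠ a → (c b • Measure.dirac b) {a} = 0 := by
    intro b hb
    simp [Measure.dirac_apply' _ (measurableSet_singleton a), Set.indicator_apply, hb]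
  rw [μ, Measure.sum_apply _ (measurableSet_singleton a), tsum_eq_single a hz]
  simp

lemma tsum_c : (∑' k, c k) = 1 := by
  have he : Summable (fun m => c (2 * m)) := ENNReal.summable
  have ho : Summable (fun m => c (2 * m + 1)) := ENNReal.summable
  rw [← tsum_even_add_odd he ho]
  have h1 : ∀ m, c (2 * m) = 2⁻¹ ^ (m + 2) := fun m => (c_pair m).1
  have h2 : ∀ m, c (2 * m + 1) = 2⁻¹ ^ (m + 2) := fun m => (c_pair m).2
  simp only [h1, h2]
  have : (∑' m : ℕ, (2⁻¹ : ℝ≥0∞) ^ (m + 2)) = 2⁻¹ ^ 2 * ∑' m : ℕ, (2⁻¹ : ℝ≥0∞) ^ m := by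
    rw [← ENNReal.tsum_mul_left]
    congr 1 with m
    rw [pow_add, mul_comm]
  rw [this, ENNReal.tsum_geometric]
  have h12 : (1 : ℝ≥0∞) - 2⁻¹ = 2⁻¹ := by
    rw [ENNReal.sub_eq_of_eq_add (by simp)]
    rw [ENNReal.inv_two_add_inv_two]
  rw [h12, inv_inv]
  have h4 : (2 : ℝ≥0∞)⁻¹ ^ 2 * 2 = 2⁻¹ := by
    rw [sq, mul_assoc, ENNReal.inv_mul_cancel (by norm_num) (by norm_num), mul_one]
  rw [h4, ENNReal.inv_two_add_inv_two]

instance : IsProbabilityMeasure μ := by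
  constructor
  rw [μ, Measure.sum_apply _ MeasurableSet.univ]
  simp [tsum_c]

lemma integrable_of_bound (g : ℕ → ℝ) (C : ℝ) (h : ∀ k, |g k| ≤ C) : Integrable g μ := by
  refine Integrable.mono' (integrable_const C) ?_ (Filter.Eventually.of_forall fun k => ?_)
  · exact (measurable_from_top).aestronglyMeasurable
  · simpa [Real.norm_eq_abs] using h k

lemma F_le (n : ℕ) : F n ≤ (inferInstance : MeasurableSpace ℕ) := le_top

lemma F_antitone (n : ℕ) : F (n + 1) ≤ F n := by
  have hfg : f (n + 1) = (fun j => if j < 2 * n + 3 then 0 else j) ∘ f n := by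
    funext k
    simp only [f, Function.comp]
    split_ifs <;> omega
  rw [F, hfg, ← MeasurableSpace.comap_comp]
  exact MeasurableSpace.comap_mono le_top

lemma Y_measurable (n : ℕ) : Measurable[F n] (Y n) := by
  have hY : Y n = (fun j : ℕ => if j = 0 then (0 : ℝ) else (-1) ^ (j - 1)) ∘ f n := by
    funext k
    by_cases h : k < 2 * n <;> simp [Y, f, h]
  rw [hY]
  exact measurable_from_top.comp (Measurable.of_comap_le le_rfl)

lemma sum_pairs (w : ℕ → ℝ) (hw : ∀ m, w (2 * m + 1) = w (2 * m)) (n : ℕ) :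
    ∑ k ∈ Finset.range (2 * n), w k * (-1 : ℝ) ^ k = 0 := by
  induction n with
  | zero => simp
  | succ n ih =>
    have : 2 * (n + 1) = (2 * n + 1) + 1 := by ring
    rw [this, Finset.sum_range_succ, Finset.sum_range_succ, ih]
    have he : (-1 : ℝ) ^ (2 * n) = 1 := Even.neg_one_pow ⟨n, by ring⟩
    have ho : (-1 : ℝ) ^ (2 * n + 1) = -1 := Odd.neg_one_pow ⟨n, by ring⟩
    rw [he, ho, hw n]; ring

lemma abs_Y_le (n k : ℕ) : |Y n k| ≤ 1 := by
  by_cases h : k < 2 * n <;> simp [Y, h]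

lemma abs_X_le (k : ℕ) : |X k| ≤ 1 := by
  simp [X, abs_pow]

lemma integral_D (n : ℕ) (s : Set ℕ) (hs : MeasurableSet[F n] s) :
    ∫ x in s, (if x < 2 * n then (-1 : ℝ) ^ x else 0) ∂μ = 0 := by
  set D : ℕ → ℝ := fun k => if k < 2 * n then (-1 : ℝ) ^ k else 0 with hD
  obtain ⟨t, -, rfl⟩ := hs
  by_cases h0 : (0 : ℕ) ∈ t
  · have hmem : ∀ k, k < 2 * n → k ∈ f n ⁻¹' t := fun k hk => by
      simp [f, hk, h0, Set.mem_preimage]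
    have hind : Integrable ((f n ⁻¹' t).indicator D) μ := by
      apply integrable_of_bound _ 1
      intro k
      by_cases hk : k ∈ f n ⁻¹' t
      · rw [Set.indicator_of_mem hk]
        by_cases h2 : k < 2 * n <;> simp [hD, h2]
      · simp [Set.indicator_of_notMem hk]
    rw [← integral_indicator ((Set.to_countable _).measurableSet),
      integral_countable' hind,
      tsum_eq_sum (s := Finset.range (2 * n)) ?side]
    case side =>
      intro a ha
      have h2 : ¬ a < 2 * n := fun h => ha (Finset.mem_range.mpr h)
      simp [Set.indicator_apply, hD, h2]
    rw [← sum_pairs (fun k => (c k).toReal) (fun m => by show (c (2*m+1)).toReal = (c (2*m)).toReal; rw [(c_pair m).1, (c_pair m).2]) n]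
    apply Finset.sum_congr rfl
    intro k hk
    have hk2 : k < 2 * n := Finset.mem_range.mp hk
    rw [measureReal_def, μ_singleton, Set.indicator_of_mem (hmem k hk2), smul_eq_mul]
    simp [hD, hk2]
  · apply setIntegral_eq_zero_of_forall_eq_zero
    intro x hx
    have h2 : ¬ x < 2 * n := by
      intro h
      exact h0 (by simpa [f, h] using hx)
    simp [hD, h2]

lemma Y_eq_condexp (n : ℕ) : Y n =ᵐ[μ] μ[X | F n] := by
  haveI : SigmaFinite (μ.trim (F_le n)) := by infer_instance
  have hX : Integrable X μ := integrable_of_bound X 1 abs_X_le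
  have hYi : Integrable (Y n) μ := integrable_of_bound (Y n) 1 (abs_Y_le n)
  refine ae_eq_condExp_of_forall_setIntegral_eq (F_le n) hX
    (fun s _ _ => hYi.integrableOn) (fun s hs _ => ?_) ?_
  · have hXd : ∀ x, X x = Y n x + (if x < 2 * n then (-1 : ℝ) ^ x else 0) := by
      intro x; by_cases h : x < 2 * n <;> simp [X, Y, h]
    have hDi : Integrable (fun x => if x < 2 * n then (-1 : ℝ) ^ x else 0) μ := by
      apply integrable_of_bound _ 1
      intro k; by_cases h : k < 2 * n <;> simp [h]
    calc ∫ x in s, Y n x ∂μ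
        = ∫ x in s, Y n x ∂μ + ∫ x in s, (if x < 2 * n then (-1:ℝ)^x else 0) ∂μ := by
          rw [integral_D n s hs, add_zero]
      _ = ∫ x in s, X x ∂μ := by
          rw [← integral_add hYi.integrableOn hDi.integrableOn]
          exact integral_congr_ae (Filter.Eventually.of_forall fun x => (hXd x).symm)
  · exact StronglyMeasurable.aestronglyMeasurable ((Y_measurable n).stronglyMeasurable)

lemma eLpNorm_Y (n : ℕ) : eLpNorm (Y n) ⊤ μ = 1 := by
  rw [eLpNorm_exponent_top]
  apply le_antisymm
  · simpa using eLpNormEssSup_le_of_ae_bound (C := 1)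
      (Filter.Eventually.of_forall fun k => by simpa [Real.norm_eq_abs] using abs_Y_le n k)
  · by_contra h
    push_neg at h
    have hae := ae_le_eLpNormEssSup (f := Y n) (μ := μ)
    have hsub : ({2 * n} : Set ℕ) ⊆
        {x | ¬ (‖Y n x‖₊ : ℝ≥0∞) ≤ eLpNormEssSup (Y n) μ} := by
      intro x hx
      rw [Set.mem_singleton_iff] at hx
      subst hx
      simp only [Set.mem_setOf_eq, not_le]
      have hy : Y n (2 * n) = 1 := by simp [Y, (even_two_mul n).neg_one_pow]
      rw [hy]
      simpa using h
    have hnull := measure_mono_null hsub (ae_iff.mp hae)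
    rw [μ_singleton] at hnull
    exact c_ne_zero _ hnull

end BMF
end


/-- The backward martingale convergence theorem fails in `L^∞`: there is a
probability space, a decreasing sequence of σ-algebras `(F_n)` and a random
variable `X` with `|X| ≤ 1` such that `E(X|F_n) → 0` a.s. but
`‖E(X|F_n)‖_∞ = 1` for all `n`. -/
theorem backward_martingale_fails_in_Linfty :
    ∃ (Ω : Type) (m0 : MeasurableSpace Ω) (μ : Measure Ω)
      (_ : IsProbabilityMeasure μ) (F : ℕ → MeasurableSpace Ω) (X : Ω → ℝ),
      (∀ n, F (n + 1) ≤ F n) ∧ (∀ n, F n ≤ m0) ∧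
      (∀ ω, |X ω| ≤ 1) ∧
      (∀ᵐ ω ∂μ, Tendsto (fun n => (μ[X | F n]) ω) atTop (𝓝 0)) ∧
      (∀ n, eLpNorm (μ[X | F n]) ⊤ μ = 1) := by

  refine ⟨ℕ, inferInstance, BMF.μ, inferInstance, BMF.F, BMF.X,
    BMF.F_antitone, BMF.F_le, BMF.abs_X_le, ?_, ?_⟩
  · have hall : ∀ᵐ ω ∂BMF.μ, ∀ n, BMF.Y n ω = (BMF.μ[BMF.X | BMF.F n]) ω :=
      ae_all_iff.mpr fun n => BMF.Y_eq_condexp n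
    filter_upwards [hall] with ω hω
    refine (tendsto_const_nhds (x := (0:ℝ))).congr' ?_
    filter_upwards [Filter.eventually_ge_atTop (ω + 1)] with n hn
    rw [← hω n]
    simp [BMF.Y, (by omega : ω < 2 * n)]
  · intro n
    rw [eLpNorm_congr_ae (BMF.Y_eq_condexp n).symm]
    exact BMF.eLpNorm_Y n
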